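/- Let U be the De Concini–Kac integral form of U_q over the DVR R and U^res Lusztig's integral form. Then U^fin := {u ∈ U : ad(U^res)(u) is finitely generated over R} equals U_q^fin ∩ U, and also equals {u ∈ U : ad(U)(u) is finitely generated over R}. -/

import Mathlib

/-- **The integral finite part.**  Let `U ⊆ Ures ⊆ Uq` be the De Concini–Kac and Lusztig
integral forms (`R`-subalgebras of `Uq`, both `L`-lattices) of the quantized enveloping
algebra `Uq` over `L = Frac R`, with adjoint action `ad`, such that the adjoint action
of `Ures` preserves `U`, and such that (key input) every `R`-submodule of `Uq` contained
in `Ures` whose `L`-span is finite dimensional is finitely generated.  Then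
`U^fin := {u ∈ U : ad(Ures)(u) is f.g. over R}` equals `U_q^fin ∩ U`
(where `U_q^fin = {u : ad(Uq)(u) is finite dimensional}`) and also equals
`{u ∈ U : ad(U)(u) is f.g. over R}`. -/
theorem integral_finite_part_eq
    (R L : Type*) [CommRing R] [Field L] [Algebra R L]
    (Uq : Type*) [Ring Uq] [Algebra L Uq] [Algebra R Uq] [IsScalarTower R L Uq]
    (ad : Uq →ₗ[L] Uq →ₗ[L] Uq)
    (U Ures : Subalgebra R Uq)
    (hsub : U ≤ Ures)
    (hlatU : Submodule.span L (U : Set Uq) = ⊤)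
    (hstab : ∀ x ∈ Ures, ∀ u ∈ U, ad x u ∈ U)
    (hkey : ∀ N : Submodule R Uq, (N : Set Uq) ⊆ (Ures : Set Uq) →
      FiniteDimensional L (Submodule.span L (N : Set Uq)) → N.FG) :
    ({u : Uq | u ∈ U ∧ (Submodule.span R ((fun x => ad x u) '' (Ures : Set Uq))).FG}
        = {u : Uq | u ∈ U ∧
            FiniteDimensional L (Submodule.span L (Set.range fun x : Uq => ad x u))}) ∧
    ({u : Uq | u ∈ U ∧ (Submodule.span R ((fun x => ad x u) '' (Ures : Set Uq))).FG}
        = {u : Uq | u ∈ U ∧ (Submodule.span R ((fun x => ad x u) '' (U : Set Uq))).FG}) := by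

  classical
  have keyspan : ∀ u : Uq, Submodule.span L (Set.range fun x : Uq => ad x u)
      = Submodule.span L ((fun x => ad x u) '' (U : Set Uq)) := by
    intro u
    refine le_antisymm ?_ (Submodule.span_mono ?_)
    · rw [Submodule.span_le]
      rintro _ ⟨x, rfl⟩
      have hx : x ∈ Submodule.span L (U : Set Uq) := by rw [hlatU]; trivial
      induction hx using Submodule.span_induction with
      | mem y hy => exact Submodule.subset_span ⟨y, hy, rfl⟩
      | zero => simp
      | add y z _ _ hy hz => simpa using Submodule.add_mem _ hy hz
      | smul c y _ hy => simpa using Submodule.smul_mem _ c hy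
    · rintro _ ⟨x, _, rfl⟩
      exact ⟨x, rfl⟩
  -- finite dimensionality of the L-span of an FG R-submodule
  have findim_of_fg : ∀ N : Submodule R Uq, N.FG →
      FiniteDimensional L (Submodule.span L (N : Set Uq)) := by
    intro N hN
    obtain ⟨t, ht⟩ := hN
    rw [← ht, Submodule.span_span_of_tower]
    exact FiniteDimensional.span_of_finite L t.finite_toSet
  -- A ⊆ B style implication: fg over Ures image implies fin dim of full range span
  have AtoB : ∀ u : Uq, u ∈ U →
      (Submodule.span R ((fun x => ad x u) '' (Ures : Set Uq))).FG →
      FiniteDimensional L (Submodule.span L (Set.range fun x : Uq => ad x u)) := by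
    intro u hu hfg
    have hfd := findim_of_fg _ hfg
    have hle : Submodule.span L (Set.range fun x : Uq => ad x u)
        ≤ Submodule.span L ((Submodule.span R ((fun x => ad x u) '' (Ures : Set Uq)) : Set Uq)) := by
      rw [keyspan u, Submodule.span_span_of_tower]
      exact Submodule.span_mono (Set.image_mono hsub)
    exact Submodule.finiteDimensional_of_le hle
  -- B implies FG of span over image of any S ⊆ Ures
  have BtoFG : ∀ (S : Subalgebra R Uq), S ≤ Ures → ∀ u : Uq, u ∈ U →
      FiniteDimensional L (Submodule.span L (Set.range fun x : Uq => ad x u)) →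
      (Submodule.span R ((fun x => ad x u) '' (S : Set Uq))).FG := by
    intro S hS u hu hfd
    apply hkey
    · intro y hy
      have hle : Submodule.span R ((fun x => ad x u) '' (S : Set Uq))
          ≤ Subalgebra.toSubmodule Ures := by
        rw [Submodule.span_le]
        rintro _ ⟨x, hx, rfl⟩
        exact hsub (hstab x (hS hx) u hu)
      exact hle hy
    · have hle : Submodule.span L ((Submodule.span R ((fun x => ad x u) '' (S : Set Uq)) : Set Uq))
          ≤ Submodule.span L (Set.range fun x : Uq => ad x u) := by
        rw [Submodule.span_span_of_tower]
        exact Submodule.span_mono (Set.image_subset_range _ _)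
      exact Submodule.finiteDimensional_of_le hle
  constructor
  · ext u
    exact ⟨fun ⟨hu, hfg⟩ => ⟨hu, AtoB u hu hfg⟩,
      fun ⟨hu, hfd⟩ => ⟨hu, BtoFG Ures le_rfl u hu hfd⟩⟩
  · ext u
    exact ⟨fun ⟨hu, hfg⟩ => ⟨hu, BtoFG U hsub u hu (AtoB u hu hfg)⟩,
      fun ⟨hu, hfg⟩ => by
        have hfd : FiniteDimensional L (Submodule.span L (Set.range fun x : Uq => ad x u)) := by
          have hfd0 := findim_of_fg _ hfg
          have hle : Submodule.span L (Set.range fun x : Uq => ad x u)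
              ≤ Submodule.span L ((Submodule.span R ((fun x => ad x u) '' (U : Set Uq)) : Set Uq)) := by
            rw [keyspan u, Submodule.span_span_of_tower]
          exact Submodule.finiteDimensional_of_le hle
        exact ⟨hu, BtoFG Ures le_rfl u hu hfd⟩⟩
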